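/- Fix d* > 0. If for every initial state x(0) in R^n there exist a time t_f > 0 and an input u on [0,t_f] such that every component of x(t_f) is at least d*, then for every threshold d >= 0 and every initial state x(0) in R^n there exist a time t_f > 0 and an input u on [0,t_f] such that every component of x(t_f) is at least d. (In a linear system, d-herdability for one positive threshold implies herdability for every nonnegative threshold.) -/

import Mathlib

open MeasureTheory

/-- The state of the LTI system `x' = A x + B u` at time `tf`, starting from `x0`
under the input `u`:  `x(tf) = exp(tf A) x0 + ∫_0^tf exp((tf-τ) A) B u(τ) dτ`. -/
noncomputable def stateAt {n m : ℕ} (A : Matrix (Fin n) (Fin n) ℝ) (B : Matrix (Fin n) (Fin m) ℝ)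
    (x0 : Fin n → ℝ) (u : ℝ → Fin m → ℝ) (tf : ℝ) : Fin n → ℝ :=
  (NormedSpace.exp (tf • A)).mulVec x0 +
    ∫ τ in (0:ℝ)..tf, (NormedSpace.exp ((tf - τ) • A) * B).mulVec (u τ)

/-- The input `u` is admissible (integrable) on `[0, tf]`. -/
def ValidInput {n m : ℕ} (A : Matrix (Fin n) (Fin n) ℝ) (B : Matrix (Fin n) (Fin m) ℝ)
    (tf : ℝ) (u : ℝ → Fin m → ℝ) : Prop :=
  IntervalIntegrable (fun τ => (NormedSpace.exp ((tf - τ) • A) * B).mulVec (u τ)) volume 0 tf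

/-- A subset `S` of the states is herdable: from every initial condition and for every
threshold `h ≥ 0` there are a finite time `tf > 0` and an input driving every state in `S`
at least to `h` at time `tf`. -/
def Herdable {n m : ℕ} (A : Matrix (Fin n) (Fin n) ℝ) (B : Matrix (Fin n) (Fin m) ℝ)
    (S : Set (Fin n)) : Prop :=
  ∀ x0 : Fin n → ℝ, ∀ h : ℝ, 0 ≤ h →
    ∃ tf : ℝ, 0 < tf ∧ ∃ u : ℝ → Fin m → ℝ, ValidInput A B tf u ∧
      ∀ i ∈ S, h ≤ stateAt A B x0 u tf i

/-- The controllability matrix `C = [B, AB, …, A^{n-1} B]`; the column indexed by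
`(d, j)` is the `j`-th column of `A^d B`. -/
def ctrb {n m : ℕ} (A : Matrix (Fin n) (Fin n) ℝ) (B : Matrix (Fin n) (Fin m) ℝ) :
    Matrix (Fin n) (Fin n × Fin m) ℝ := fun i p => (A ^ (p.1 : ℕ) * B) i p.2

/-- If the system can be driven (from any initial state) so that all components exceed a
fixed positive threshold `dstar`, then for every nonnegative threshold `d` and every
initial state it can be driven so that all components exceed `d`. -/
theorem herdable_of_pos_threshold {n m : ℕ}
    (A : Matrix (Fin n) (Fin n) ℝ) (B : Matrix (Fin n) (Fin m) ℝ)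
    (dstar : ℝ) (hdstar : 0 < dstar)
    (H : ∀ x0 : Fin n → ℝ, ∃ tf : ℝ, 0 < tf ∧ ∃ u : ℝ → Fin m → ℝ,
      ValidInput A B tf u ∧ ∀ i : Fin n, dstar ≤ stateAt A B x0 u tf i) :
    ∀ d : ℝ, 0 ≤ d → ∀ x0 : Fin n → ℝ, ∃ tf : ℝ, 0 < tf ∧ ∃ u : ℝ → Fin m → ℝ,
      ValidInput A B tf u ∧ ∀ i : Fin n, d ≤ stateAt A B x0 u tf i := by
  intro d hd x0
  set c : ℝ := max (d / dstar) 1 with hc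
  have hc1 : (1:ℝ) ≤ c := le_max_right _ _
  have hcpos : 0 < c := lt_of_lt_of_le one_pos hc1
  obtain ⟨tf, htf, u, hu, hbound⟩ := H (c⁻¹ • x0)
  refine ⟨tf, htf, fun τ => c • u τ, ?_, ?_⟩
  · have := hu.smul c
    unfold ValidInput
    have heq : (fun τ => (NormedSpace.exp ((tf - τ) • A) * B).mulVec (c • u τ))
        = c • fun τ => (NormedSpace.exp ((tf - τ) • A) * B).mulVec (u τ) := by
      funext τ; simp [Matrix.mulVec_smul]
    rw [heq]; exact this
  · intro i
    have hstate : stateAt A B x0 (fun τ => c • u τ) tf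
        = c • stateAt A B (c⁻¹ • x0) u tf := by
      unfold stateAt
      rw [smul_add]
      congr 1
      · rw [← Matrix.mulVec_smul, smul_smul, mul_inv_cancel₀ hcpos.ne', one_smul]
      · rw [← intervalIntegral.integral_smul]
        congr 1; ext τ j; rw [Matrix.mulVec_smul]
    have h1 : dstar ≤ stateAt A B (c⁻¹ • x0) u tf i := hbound i
    have h2 : d ≤ c * dstar := by
      have hdc : d / dstar ≤ c := le_max_left _ _
      calc d = (d / dstar) * dstar := by field_simp
        _ ≤ c * dstar := by nlinarith
    calc d ≤ c * dstar := h2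
      _ ≤ c * stateAt A B (c⁻¹ • x0) u tf i := by nlinarith
      _ = stateAt A B x0 (fun τ => c • u τ) tf i := by rw [hstate, Pi.smul_apply, smul_eq_mul]
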